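/- If P is a d-dimensional k-template and X is an infinite set, then the chromatic number of the template hypergraph L(X^d, P) equals |X|^{-(e(P) − 1)}. -/

import Mathlib

/-- `Q` is a homomorphic image of the `d`-dimensional template `P`: there is an injective
map `f` from `P` onto `Q` such that whenever `x, y ∈ P` agree in coordinate `i`, so do
`f x` and `f y`. -/
def IsHomImage {d : ℕ} {α β : Type} (P : Set (Fin d → α)) (Q : Set (Fin d → β)) : Prop :=
  ∃ f : (Fin d → α) → (Fin d → β), Set.InjOn f P ∧ Q = f '' P ∧
    ∀ x ∈ P, ∀ y ∈ P, ∀ i : Fin d, x i = y i → f x i = f y i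

/-- The edge set of the multi-template hypergraph `L(V^d, 𝓟)`: the edges are those subsets
of `V^d` that are homomorphic images of some template `P ∈ 𝓟`. -/
def multiTemplateEdges {d : ℕ} {α : Type} (V : Type) (𝓟 : Set (Set (Fin d → α))) :
    Set (Set (Fin d → V)) :=
  {Q | ∃ P ∈ 𝓟, IsHomImage P Q}

/-- `φ` is a proper coloring of the hypergraph with edge set `E`: no edge is monochromatic. -/
def IsProperColoring {V C : Type*} (E : Set (Set V)) (φ : V → C) : Prop :=
  ∀ s ∈ E, ∃ x ∈ s, ∃ y ∈ s, φ x ≠ φ y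

/-- The chromatic number of the hypergraph with vertex set `V` and edge set `E`: the least
cardinal `κ` such that there is a proper coloring with `κ` colors. -/
noncomputable def chrNum {V : Type} (E : Set (Set V)) : Cardinal :=
  sInf {κ : Cardinal | ∃ (C : Type) (φ : V → C), Cardinal.mk C = κ ∧ IsProperColoring E φ}

/-- `κ⁺ᵈ`, the `d`-fold cardinal successor of `κ`. -/
noncomputable def cardPlus (κ : Cardinal) (d : ℕ) : Cardinal := (Order.succ)^[d] κ

/-- `κ⁻ᵈ`, the least cardinal `μ` with `μ⁺ᵈ ≥ κ`. -/
noncomputable def cardMinus (κ : Cardinal) (d : ℕ) : Cardinal :=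
  sInf {μ : Cardinal | κ ≤ cardPlus μ d}

/-- The induced subhypergraph `H[X]`: vertex set `X`, edges the edges of `H` contained
in `X`. -/
def inducedEdges {V : Type} (E : Set (Set V)) (X : Set V) : Set (Set X) :=
  {s | (Subtype.val '' s) ∈ E}

/-- `I` is a distinguisher for the template `P`: any two distinct elements of `P` differ in
some coordinate in `I`. -/
def IsDistinguisher {d : ℕ} {α : Type} (P : Set (Fin d → α)) (I : Set (Fin d)) : Prop :=
  ∀ x ∈ P, ∀ y ∈ P, x ≠ y → ∃ i ∈ I, x i ≠ y i

/-- `e(P)`, the least cardinality of a distinguisher for the template `P`. -/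
noncomputable def eTemplate {d : ℕ} {α : Type} (P : Set (Fin d → α)) : ℕ :=
  sInf {m : ℕ | ∃ I : Set (Fin d), I.ncard = m ∧ IsDistinguisher P I}

section helpers
open Cardinal

lemma cardPlus_succ (κ : Cardinal) (n : ℕ) : cardPlus κ (n+1) = Order.succ (cardPlus κ n) := by
  unfold cardPlus
  rw [Function.iterate_succ_apply']

lemma le_cardPlus (κ : Cardinal) (n : ℕ) : κ ≤ cardPlus κ n := by
  induction n with
  | zero => exact le_rfl
  | succ n ih => rw [cardPlus_succ]; exact ih.trans (Order.le_succ _)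

lemma cardPlus_mono_right (κ : Cardinal) : Monotone (cardPlus κ) := by
  apply monotone_nat_of_le_succ
  intro n
  rw [cardPlus_succ]
  exact Order.le_succ _

lemma cardPlus_natCast (n m : ℕ) : cardPlus (n : Cardinal) m = ((n + m : ℕ) : Cardinal) := by
  induction m with
  | zero => simp [cardPlus]
  | succ m ih => rw [cardPlus_succ, ih, ← Cardinal.nat_succ]; exact congrArg _ (by omega)

lemma aleph0_le_cardPlus_of {lam : Cardinal} {n : ℕ} {κ : Cardinal} (hκ : ℵ₀ ≤ κ)
    (h : κ ≤ cardPlus lam n) : ℵ₀ ≤ lam := by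
  by_contra hlt
  push_neg at hlt
  obtain ⟨m, rfl⟩ := Cardinal.lt_aleph0.mp hlt
  rw [cardPlus_natCast] at h
  exact absurd (hκ.trans h) (Cardinal.nat_lt_aleph0 _).not_ge

-- pigeonhole
lemma exists_fiber_ge {A T : Type} (g : A → T) (k : ℕ) (h : #T * ((k-1 : ℕ) : Cardinal) < #A) :
    ∃ t : T, (k : Cardinal) ≤ #{a // g a = t} := by
  rcases Nat.eq_zero_or_pos k with hk | hk
  · subst hk
    have hA : Nonempty A := by
      rw [← Cardinal.mk_ne_zero_iff]
      intro h0
      rw [h0] at h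
      exact absurd h (not_lt_of_ge (zero_le))
    exact ⟨g hA.some, by simp⟩
  · by_contra hcon
    push_neg at hcon
    have hle : ∀ t : T, #{a // g a = t} ≤ ((k-1 : ℕ) : Cardinal) := by
      intro t
      have := hcon t
      have hk' : (k : Cardinal) = Order.succ ((k-1 : ℕ) : Cardinal) := by
        rw [← Cardinal.nat_succ]; norm_cast; omega
      rw [hk'] at this
      exact Order.lt_succ_iff.mp this
    have h1 : #A = Cardinal.sum (fun t : T => #{a // g a = t}) := by
      rw [← Cardinal.mk_sigma]
      exact Cardinal.mk_congr (Equiv.sigmaFiberEquiv g).symm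
    have h2 : Cardinal.sum (fun t : T => #{a // g a = t}) ≤ #T * ((k-1:ℕ) : Cardinal) := by
      rw [← Cardinal.sum_const']
      exact Cardinal.sum_le_sum _ _ hle
    exact absurd (h1 ▸ h2 : #A ≤ _) (not_le_of_gt h)
lemma boxFinite {X : Type} [Infinite X] (k : ℕ) :
    ∀ (n : ℕ) (C : Type) (_ : Finite C) (ι : Type) (_ : Fintype ι), Fintype.card ι = n →
    ∀ ψ : (ι → X) → C, ∃ b : ι → Fin k → X, (∀ i, Function.Injective (b i)) ∧
      ∃ γ : C, ∀ r : ι → Fin k, ψ (fun i => b i (r i)) = γ := by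
  intro n
  induction n with
  | zero =>
    intro C _ ι _ hcard ψ
    have : IsEmpty ι := Fintype.card_eq_zero_iff.mp hcard
    refine ⟨fun i => isEmptyElim i, fun i => isEmptyElim i, ψ (fun i => isEmptyElim i), ?_⟩
    intro r
    exact congrArg ψ (funext fun i => isEmptyElim i)
  | succ n ih =>
    intro C _ ι _ hcard ψ
    classical
    have hne : Nonempty ι := Fintype.card_pos_iff.mp (by omega)
    obtain ⟨i0⟩ := hne
    have hcard' : Fintype.card {i : ι // i ≠ i0} = n := by
      have h2 := Fintype.card_subtype_compl (fun i : ι => i = i0)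
      rw [Fintype.card_subtype_eq i0, hcard] at h2
      simpa using h2
    set N := (Nat.card C) * (k-1) + 1 with hN
    let A : Fin N → X := fun j => Infinite.natEmbedding X j.val
    have hAinj : Function.Injective A :=
      fun a b h => Fin.val_injective ((Infinite.natEmbedding X).injective h)
    let ψ' : ({i : ι // i ≠ i0} → X) → (Fin N → C) :=
      fun r j => ψ (fun i => if h : i = i0 then A j else r ⟨i, h⟩)
    obtain ⟨b', hbinj', Γ, hΓ⟩ := ih (Fin N → C) inferInstance {i : ι // i ≠ i0} inferInstance hcard' ψ'
    have hcount : #C * ((k-1 : ℕ) : Cardinal) < #(Fin N) := by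
      have : Fintype C := Fintype.ofFinite C
      rw [Cardinal.mk_fin, Cardinal.mk_fintype]
      rw [← Nat.cast_mul, ← Nat.card_eq_fintype_card]
      exact_mod_cast (by omega : Nat.card C * (k-1) < N)
    obtain ⟨γ, hγ⟩ := exists_fiber_ge Γ k hcount
    rw [← Cardinal.mk_fin k, Cardinal.le_def] at hγ
    obtain ⟨e⟩ := hγ
    refine ⟨fun i j => if h : i = i0 then A (e j).val else b' ⟨i, h⟩ j, ?_, γ, ?_⟩
    · intro i j1 j2 heq
      by_cases h : i = i0
      · simp only [dif_pos h] at heq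
        exact e.injective (Subtype.val_injective (hAinj heq))
      · simp only [dif_neg h] at heq
        exact hbinj' ⟨i, h⟩ heq
    · intro r
      have h1 := congrFun (hΓ (fun i' => r i'.val)) (e (r i0)).val
      have h2 : Γ (e (r i0)).val = γ := (e (r i0)).property
      have h3 : (fun i => (fun i j => if h : i = i0 then A (e j).val else b' ⟨i, h⟩ j) i (r i)) =
          (fun i => if h : i = i0 then A (e (r i0)).val else b' ⟨i, h⟩ (r i)) := by
        funext i
        by_cases h : i = i0
        · subst h; simp
        · simp [h]
      rw [h3]
      exact h1.trans h2
lemma boxInfinite {X C : Type} (k : ℕ) (hk : 0 < k) (μ : Cardinal) (hμ : ℵ₀ ≤ μ) (hC : #C ≤ μ) :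
    ∀ (n : ℕ) (ι : Type) (_ : Fintype ι), Fintype.card ι = n →
    ∀ (S : Set X), cardPlus μ (n-1) < #S →
    ∀ ψ : (ι → X) → C, ∃ b : ι → Fin k → X, (∀ i, Function.Injective (b i)) ∧
      (∀ i j, b i j ∈ S) ∧ ∃ γ : C, ∀ r : ι → Fin k, ψ (fun i => b i (r i)) = γ := by
  intro n
  induction n with
  | zero =>
    intro ι _ hcard S hS ψ
    have : IsEmpty ι := Fintype.card_eq_zero_iff.mp hcard
    refine ⟨fun i => isEmptyElim i, fun i => isEmptyElim i, fun i => isEmptyElim i,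
      ψ (fun i => isEmptyElim i), ?_⟩
    intro r
    exact congrArg ψ (funext fun i => isEmptyElim i)
  | succ n ih =>
    intro ι _ hcard S hS ψ
    classical
    replace hS : cardPlus μ n < #S := hS
    have hne : Nonempty ι := Fintype.card_pos_iff.mp (by omega)
    obtain ⟨i0⟩ := hne
    have hcard' : Fintype.card {i : ι // i ≠ i0} = n := by
      have h2 := Fintype.card_subtype_compl (fun i : ι => i = i0)
      rw [Fintype.card_subtype_eq i0, hcard] at h2
      simpa using h2
    set ν := Order.succ (cardPlus μ (n-1)) with hνdef
    have hν1 : cardPlus μ (n-1) < ν := Order.lt_succ _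
    have hν2 : ν ≤ #S := Order.succ_le_of_lt (lt_of_le_of_lt
      (cardPlus_mono_right μ (by omega : n-1 ≤ n)) hS)
    have hνinf : ℵ₀ ≤ ν := (hμ.trans (le_cardPlus μ (n-1))).trans hν1.le
    have hμν : μ ≤ ν := (le_cardPlus μ (n-1)).trans hν1.le
    obtain ⟨p, hp⟩ := Cardinal.le_mk_iff_exists_set.mp hν2
    set W : Set X := Subtype.val '' p with hWdef
    have hWS : W ⊆ S := by rintro x ⟨y, hy, rfl⟩; exact y.2
    have hW : #W = ν := by
      rw [hWdef, Cardinal.mk_image_eq Subtype.val_injective, hp]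
    have hIH : ∀ x : S, ∃ b' : {i : ι // i ≠ i0} → Fin k → X,
        (∀ i', Function.Injective (b' i')) ∧ (∀ i' j, b' i' j ∈ W) ∧
        ∃ γ : C, ∀ r' : {i : ι // i ≠ i0} → Fin k,
          (fun (r : {i : ι // i ≠ i0} → X) =>
            ψ (fun i => if h : i = i0 then x.val else r ⟨i, h⟩))
            (fun i' => b' i' (r' i')) = γ :=
      fun x => ih {i : ι // i ≠ i0} inferInstance hcard' W (hW ▸ hν1)
        (fun (r : {i : ι // i ≠ i0} → X) =>
          ψ (fun i => if h : i = i0 then x.val else r ⟨i, h⟩))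
    choose bb hbinj hbW γγ hmono using hIH
    -- counting
    have hF : #(({i : ι // i ≠ i0} → Fin k → W) × C) ≤ cardPlus μ n := by
      have hprod : #(({i : ι // i ≠ i0} → Fin k → W) × C)
          = #({i : ι // i ≠ i0} → Fin k → W) * #C := by
        rw [Cardinal.mk_prod, Cardinal.lift_id, Cardinal.lift_id]
      rw [hprod]
      rcases Nat.eq_zero_or_pos n with hn0 | hnpos
      · subst hn0
        have hemp : IsEmpty {i : ι // i ≠ i0} := Fintype.card_eq_zero_iff.mp hcard'
        have hsub : Subsingleton ({i : ι // i ≠ i0} → Fin k → W) :=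
          ⟨fun a b => funext fun i => isEmptyElim i⟩
        have h1 : #({i : ι // i ≠ i0} → Fin k → W) ≤ 1 := Cardinal.le_one_iff_subsingleton.mpr hsub
        calc #({i : ι // i ≠ i0} → Fin k → W) * #C ≤ 1 * μ := mul_le_mul' h1 hC
          _ = μ := one_mul μ
      · have h1 : #({i : ι // i ≠ i0} → Fin k → W) = (#(Fin k → W)) ^ (n : Cardinal) := by
          rw [← (Cardinal.power_def (Fin k → W) {i : ι // i ≠ i0}),
            Cardinal.mk_fintype {i : ι // i ≠ i0}, hcard']
        have h2 : #(Fin k → W) = ν ^ (k : Cardinal) := by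
          rw [← (Cardinal.power_def (↥W) (Fin k)), hW, Cardinal.mk_fintype (Fin k),
            Fintype.card_fin]
        have h3 : (ν ^ (k:Cardinal)) ^ (n : Cardinal) = ν := by
          rw [Cardinal.power_natCast, Cardinal.power_natCast,
            Cardinal.power_nat_eq hνinf hk, Cardinal.power_nat_eq hνinf hnpos]
        have hνn : ν = cardPlus μ n := by
          obtain ⟨m, rfl⟩ := Nat.exists_eq_add_of_lt hnpos
          rw [hνdef, zero_add]
          rw [(by omega : m + 1 - 1 = m), cardPlus_succ]
        calc #({i : ι // i ≠ i0} → Fin k → W) * #C ≤ ν * μ := by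
              rw [h1, h2, h3]; exact mul_le_mul' le_rfl hC
          _ = ν := by rw [Cardinal.mul_eq_max hνinf hμ, max_eq_left hμν]
          _ ≤ cardPlus μ n := le_of_eq hνn
    let g : S → (({i : ι // i ≠ i0} → Fin k → W) × C) :=
      fun x => (fun i' j => ⟨bb x i' j, hbW x i' j⟩, γγ x)
    have hT : #(({i : ι // i ≠ i0} → Fin k → W) × C) * ((k-1:ℕ) : Cardinal) < #S := by
      have hinf : ℵ₀ ≤ cardPlus μ n := hμ.trans (le_cardPlus μ n)
      calc #(({i : ι // i ≠ i0} → Fin k → W) × C) * ((k-1:ℕ) : Cardinal)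
          ≤ cardPlus μ n * ℵ₀ := mul_le_mul' hF (Cardinal.nat_lt_aleph0 _).le
        _ = cardPlus μ n := by
            rw [Cardinal.mul_eq_max hinf le_rfl, max_eq_left hinf]
        _ < #S := hS
    obtain ⟨t, ht⟩ := exists_fiber_ge g k hT
    rw [← Cardinal.mk_fin k, Cardinal.le_def] at ht
    obtain ⟨emb⟩ := ht
    obtain ⟨B, γ⟩ := t
    set A : Fin k → S := fun j => (emb j).val with hAdef
    have key : ∀ j : Fin k, g (A j) = (B, γ) := fun j => (emb j).property
    have hbbB : ∀ (j : Fin k) i' j', bb (A j) i' j' = (B i' j').val := by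
      intro j i' j'
      have h1 := congrArg Prod.fst (key j)
      exact congrArg Subtype.val (congrFun (congrFun h1 i') j')
    have hγγ : ∀ j : Fin k, γγ (A j) = γ := fun j => congrArg Prod.snd (key j)
    refine ⟨fun i j => if h : i = i0 then (A j).val else (B ⟨i, h⟩ j).val, ?_, ?_, γ, ?_⟩
    · intro i j1 j2 heq
      by_cases h : i = i0
      · simp only [dif_pos h] at heq
        exact emb.injective (Subtype.val_injective (Subtype.val_injective heq))
      · simp only [dif_neg h] at heq
        rw [← hbbB ⟨0, hk⟩, ← hbbB ⟨0, hk⟩] at heq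
        exact hbinj (A ⟨0, hk⟩) ⟨i, h⟩ heq
    · intro i j
      by_cases h : i = i0
      · simp only [dif_pos h]
        exact (A j).2
      · simp only [dif_neg h]
        exact hWS (B ⟨i, h⟩ j).2
    · intro r
      have h1 := hmono (A (r i0)) (fun i' => r i'.val)
      have h3 : (fun i => (fun i j => if h : i = i0 then (A j).val else (B ⟨i, h⟩ j).val) i (r i))
          = (fun i => if h : i = i0 then (A (r i0)).val
              else bb (A (r i0)) ⟨i, h⟩ (r i)) := by
        funext i
        by_cases h : i = i0
        · subst h; simp
        · simp only [dif_neg h]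
          exact (hbbB (r i0) ⟨i, h⟩ (r i)).symm
      rw [h3]
      exact h1.trans (hγγ (r i0))
open Classical in
lemma mono_edge_of_box {d k : ℕ} {α X C : Type} (hk : 2 ≤ k)
    (P : Set (Fin d → α)) (hPfin : P.Finite) (hPcard : P.ncard = k)
    (I : Set (Fin d)) (hIdist : IsDistinguisher P I)
    (z : X) (φ : (Fin d → X) → C)
    (b : I → Fin k → X) (hbinj : ∀ i, Function.Injective (b i)) (γ : C)
    (hmono : ∀ r : I → Fin k,
      φ (fun i => if h : i ∈ I then b ⟨i, h⟩ (r ⟨i, h⟩) else z) = γ) :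
    ∃ Q ∈ multiTemplateEdges X ({P} : Set (Set (Fin d → α))), ∀ w ∈ Q, φ w = γ := by
  classical
  have hVfin : ∀ i : Fin d, ((fun p => p i) '' P).Finite := fun i => hPfin.image _
  have hVcard : ∀ i : Fin d, ((hVfin i).toFinset).card ≤ k := by
    intro i
    rw [← Set.ncard_eq_toFinset_card _ (hVfin i)]
    exact le_trans (Set.ncard_image_le hPfin) (le_of_eq hPcard)
  let idx : ∀ i : Fin d, α → Fin k := fun i a =>
    if h : a ∈ (hVfin i).toFinset
    then Fin.castLE (hVcard i) (((hVfin i).toFinset.equivFin) ⟨a, h⟩)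
    else ⟨0, by omega⟩
  have hidx : ∀ (i : Fin d) (a1 a2 : α), a1 ∈ (fun p => p i) '' P → a2 ∈ (fun p => p i) '' P →
      idx i a1 = idx i a2 → a1 = a2 := by
    intro i a1 a2 h1 h2 heq
    rw [← Set.Finite.mem_toFinset (hVfin i)] at h1 h2
    simp only [idx, dif_pos h1, dif_pos h2] at heq
    have h3 : (((hVfin i).toFinset.equivFin) ⟨a1, h1⟩ : Fin _) = ((hVfin i).toFinset.equivFin) ⟨a2, h2⟩ := by
      apply Fin.val_injective
      simpa using congrArg Fin.val heq
    have := ((hVfin i).toFinset.equivFin).injective h3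
    exact congrArg Subtype.val this
  set f : (Fin d → α) → (Fin d → X) :=
    fun w i => if h : i ∈ I then b ⟨i, h⟩ (idx i (w i)) else z with hfdef
  have hhom : ∀ x ∈ P, ∀ y ∈ P, ∀ i : Fin d, x i = y i → f x i = f y i := by
    intro x _ y _ i hxy
    simp only [hfdef, hxy]
  have hinj : Set.InjOn f P := by
    intro x hx y hy hfeq
    by_contra hne
    obtain ⟨i, hiI, hixy⟩ := hIdist x hx y hy hne
    have h1 : f x i = f y i := congrFun hfeq i
    simp only [hfdef, dif_pos hiI] at h1
    have h2 := hbinj ⟨i, hiI⟩ h1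
    exact hixy (hidx i (x i) (y i) ⟨x, hx, rfl⟩ ⟨y, hy, rfl⟩ h2)
  refine ⟨f '' P, ⟨P, rfl, f, hinj, rfl, hhom⟩, ?_⟩
  rintro w ⟨p, hp, rfl⟩
  exact hmono (fun i => idx i.val (p i.val))
lemma lemQ {X : Type} (d : ℕ) (hd : 0 < d) (lam : Cardinal) (hlam : ℵ₀ ≤ lam)
    (L : Type) (hL : #L = lam) (jk : L) :
    ∀ (t : ℕ) (S : Set X), #S ≤ cardPlus lam t →
    ∃ c : (Fin d → X) → (List (Fin d) × L),
      (∀ u, (c u).1.length ≤ t) ∧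
      (∀ u v : Fin d → X, (∀ i, u i ∈ S) → (∀ i, v i ∈ S) → c u = c v →
        (∀ i ∈ (c u).1, u i = v i) → u = v) := by
  intro t
  induction t with
  | zero =>
    intro S hS
    classical
    rw [(rfl : cardPlus lam 0 = lam)] at hS
    have h1 : #{u : Fin d → X // ∀ i, u i ∈ S} ≤ #L := by
      have e1 : {u : Fin d → X // ∀ i, u i ∈ S} ≃ (Fin d → S) := Equiv.subtypePiEquivPi
      calc #{u : Fin d → X // ∀ i, u i ∈ S} = #(Fin d → S) := Cardinal.mk_congr e1
        _ = #S ^ (d : Cardinal) := by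
            rw [← Cardinal.power_def, Cardinal.mk_fintype (Fin d), Fintype.card_fin]
        _ ≤ lam ^ (d : Cardinal) := Cardinal.power_le_power_right hS
        _ = lam := by rw [Cardinal.power_natCast, Cardinal.power_nat_eq hlam hd]
        _ = #L := hL.symm
    obtain ⟨emb⟩ := Cardinal.le_def _ _ |>.mp h1
    refine ⟨fun u => if hu : ∀ i, u i ∈ S then ([], emb ⟨u, hu⟩) else ([], jk), ?_, ?_⟩
    · intro u
      by_cases hu : ∀ i, u i ∈ S
      · simp [dif_pos hu]
      · simp [dif_neg hu]
    · intro u v hu hv hc _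
      simp only [dif_pos hu, dif_pos hv] at hc
      have := congrArg Prod.snd hc
      simp only at this
      exact congrArg Subtype.val (emb.injective this)
  | succ t ih =>
    intro S hS
    classical
    rw [cardPlus_succ] at hS
    have hcpinf : ℵ₀ ≤ cardPlus lam t := hlam.trans (le_cardPlus lam t)
    set o := (#S).ord with hodef
    set T := o.ToType with hTdef
    have hTcard : #T = #S := by rw [hTdef, Cardinal.mk_toType, hodef, Cardinal.card_ord]
    obtain ⟨e⟩ := Cardinal.eq.mp hTcard.symm
    haveI : IsWellOrder T (· < ·) := ⟨⟩
    have hseg : ∀ x : T, #{y : T // y ≤ x} ≤ cardPlus lam t := by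
      intro x
      have h0 : #{y : T // y < x} = (Ordinal.typein (α := T) (· < ·) x).card :=
        (Ordinal.card_typein x).symm
      have h2 : (Ordinal.typein (α := T) (· < ·) x) < o := by
        have := Ordinal.typein_lt_type ((· < ·) : T → T → Prop) x
        rwa [Ordinal.type_toType] at this
      have h3 : #{y : T // y < x} < #S := by
        rw [h0]
        exact Cardinal.lt_ord.mp h2
      have h4 : #{y : T // y < x} ≤ cardPlus lam t :=
        Order.lt_succ_iff.mp (lt_of_lt_of_le h3 hS)
      have h5 : ({y : T | y ≤ x} : Set T) = insert x {y : T | y < x} := by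
        ext y
        simp only [Set.mem_insert_iff, Set.mem_setOf_eq]
        constructor
        · intro h; rcases eq_or_lt_of_le h with h' | h'
          · exact Or.inl h'
          · exact Or.inr h'
        · rintro (rfl | h)
          · exact le_rfl
          · exact le_of_lt h
      calc #{y : T // y ≤ x} = #(insert x {y : T | y < x} : Set T) := by rw [← h5]; rfl
        _ = #{y : T // y < x} + 1 := Cardinal.mk_insert (by simp)
        _ ≤ cardPlus lam t + 1 := by exact add_le_add_left h4 1
        _ = cardPlus lam t := Cardinal.add_one_eq hcpinf
    set SM : S → Set X := fun M => {x : X | ∃ h : x ∈ S, e ⟨x, h⟩ ≤ e M} with hSMdef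
    have hSMcard : ∀ M : S, #(SM M) ≤ cardPlus lam t := by
      intro M
      refine le_trans (Cardinal.mk_le_of_injective (f := fun x : SM M =>
        (⟨e ⟨x.val, x.property.choose⟩, x.property.choose_spec⟩ : {y : T // y ≤ e M})) ?_)
        (hseg (e M))
      intro x1 x2 h12
      have h13 : e ⟨x1.val, x1.property.choose⟩ = e ⟨x2.val, x2.property.choose⟩ :=
        congrArg Subtype.val h12
      have h15 := e.injective h13
      have h14 : (x1 : X) = (x2 : X) := Subtype.mk_eq_mk.mp h15
      exact Subtype.ext h14
    have hIH : ∀ M : S, ∃ c' : (Fin d → X) → (List (Fin d) × L),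
        (∀ u, (c' u).1.length ≤ t) ∧
        (∀ u v : Fin d → X, (∀ i, u i ∈ SM M) → (∀ i, v i ∈ SM M) → c' u = c' v →
          (∀ i ∈ (c' u).1, u i = v i) → u = v) :=
      fun M => ih (SM M) (hSMcard M)
    choose cM hlen hprop using hIH
    have hmax : ∀ (u : Fin d → X) (hu : ∀ i, u i ∈ S),
        ∃ m : Fin d, ∀ j, e ⟨u j, hu j⟩ ≤ e ⟨u m, hu m⟩ := by
      intro u hu
      obtain ⟨m, -, hm⟩ := Finset.exists_max_image Finset.univ
        (fun j : Fin d => e ⟨u j, hu j⟩) ⟨⟨0, hd⟩, Finset.mem_univ _⟩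
      exact ⟨m, fun j => hm j (Finset.mem_univ j)⟩
    refine ⟨fun u => if hu : ∀ i, u i ∈ S then
        ((hmax u hu).choose :: (cM ⟨u (hmax u hu).choose, hu _⟩ u).1,
          (cM ⟨u (hmax u hu).choose, hu _⟩ u).2)
      else ([], jk), ?_, ?_⟩
    · intro u
      by_cases hu : ∀ i, u i ∈ S
      · simp only [dif_pos hu, List.length_cons]
        have := hlen ⟨u (hmax u hu).choose, hu _⟩ u
        omega
      · simp [dif_neg hu]
    · intro u v hu hv hc hagree
      simp only [dif_pos hu, dif_pos hv] at hc hagree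
      have h1 := congrArg Prod.fst hc
      have h2 := congrArg Prod.snd hc
      simp only at h1 h2
      rw [List.cons.injEq] at h1
      obtain ⟨hm, hl⟩ := h1
      have hum : u (hmax u hu).choose = v (hmax u hu).choose := by
        apply hagree
        exact List.mem_cons_self
      have hMv : (⟨v (hmax v hv).choose, hv _⟩ : S) = ⟨u (hmax u hu).choose, hu _⟩ := by
        apply Subtype.ext
        rw [← hm]
        exact hum.symm
      rw [hMv] at hl h2
      set M : S := (⟨u (hmax u hu).choose, hu _⟩ : S) with hMdef
      have hcu : ∀ i, u i ∈ SM M := fun i => ⟨hu i, (hmax u hu).choose_spec i⟩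
      have hcv : ∀ i, v i ∈ SM M := by
        intro i
        refine ⟨hv i, ?_⟩
        have h6 := (hmax v hv).choose_spec i
        have h7 : (⟨v (hmax v hv).choose, hv _⟩ : S) = M := hMv
        rw [h7] at h6
        exact h6
      refine hprop M u v hcu hcv (Prod.ext hl h2) ?_
      intro i hi
      exact hagree i (List.mem_cons_of_mem _ hi)
/-- **Lemma 2.1.** If `P` is a `d`-dimensional `k`-template and `X` is an infinite set, then
`χ(L(X^d, P)) = |X|^{-(e(P) − 1)}`. -/
theorem stmt_5 (d k : ℕ) (hk : 2 ≤ k) (α X : Type) [Infinite X]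
    (P : Set (Fin d → α)) (hPfin : P.Finite) (hPcard : P.ncard = k) :
    chrNum (multiTemplateEdges X ({P} : Set (Set (Fin d → α)))) =
      cardMinus (Cardinal.mk X) (eTemplate P - 1) := by
  classical
  have hκinf : ℵ₀ ≤ #X := Cardinal.aleph0_le_mk X
  have hex2 : ∃ x ∈ P, ∃ y ∈ P, x ≠ y := by
    rw [← Set.one_lt_ncard hPfin]
    omega
  have hd : 0 < d := by
    by_contra h0
    push_neg at h0
    have hd0 : d = 0 := by omega
    subst hd0
    obtain ⟨x, hx, y, hy, hxy⟩ := hex2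
    exact hxy (funext fun i => i.elim0)
  have heSet : {m : ℕ | ∃ I : Set (Fin d), I.ncard = m ∧ IsDistinguisher P I}.Nonempty := by
    refine ⟨(Set.univ : Set (Fin d)).ncard, Set.univ, rfl, ?_⟩
    intro x hx y hy hxy
    by_contra hcon
    push_neg at hcon
    exact hxy (funext fun i => hcon i (Set.mem_univ i))
  obtain ⟨I0, hI0card, hI0dist⟩ : ∃ I : Set (Fin d), I.ncard = eTemplate P ∧ IsDistinguisher P I :=
    Nat.sInf_mem heSet
  have he1 : 1 ≤ eTemplate P := by
    by_contra h
    have hI00 : I0 = ∅ := by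
      have h2 : I0.ncard = 0 := by omega
      exact (Set.ncard_eq_zero (Set.toFinite I0)).mp h2
    obtain ⟨x, hx, y, hy, hxy⟩ := hex2
    obtain ⟨i, hi, -⟩ := hI0dist x hx y hy hxy
    rw [hI00] at hi
    exact absurd hi (Set.notMem_empty i)
  set n := eTemplate P - 1 with hndef
  have hTSne : {μ : Cardinal | #X ≤ cardPlus μ n}.Nonempty := ⟨#X, show #X ≤ cardPlus (#X) n from le_cardPlus (#X) n⟩
  have hmem : #X ≤ cardPlus (cardMinus (#X) n) n := csInf_mem hTSne
  have hmin : ∀ μ : Cardinal, #X ≤ cardPlus μ n → cardMinus (#X) n ≤ μ :=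
    fun μ h => csInf_le (OrderBot.bddBelow _) h
  set lam := cardMinus (#X) n with hlamdef
  have hlaminf : ℵ₀ ≤ lam := aleph0_le_cardPlus_of hκinf hmem
  have hL : #(Quotient.out lam) = lam := Cardinal.mk_out lam
  have hLne : Nonempty (Quotient.out lam) := by
    rw [← Cardinal.mk_ne_zero_iff, hL]
    exact ne_of_gt (lt_of_lt_of_le Cardinal.aleph0_pos hlaminf)
  obtain ⟨jk⟩ := hLne
  obtain ⟨c, hclen, hcprop⟩ := lemQ d hd lam hlaminf (Quotient.out lam) hL jk n Set.univ
    (by rw [Cardinal.mk_univ]; exact hmem)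
  -- properness of c
  have hproper : IsProperColoring (multiTemplateEdges X ({P} : Set (Set (Fin d → α)))) c := by
    intro s hs
    by_contra hcon
    push_neg at hcon
    obtain ⟨P', hP', f, hfinj, hfQ, hfhom⟩ := hs
    rw [Set.mem_singleton_iff] at hP'
    have hP2 : P = P' := hP'.symm
    subst hP2
    obtain ⟨x0, hx0, y0, hy0, hxy0⟩ := hex2
    have hfx0 : f x0 ∈ s := by rw [hfQ]; exact ⟨x0, hx0, rfl⟩
    have hRnd : ¬ IsDistinguisher P {i : Fin d | i ∈ (c (f x0)).1} := by
      intro hdist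
      have h2 : eTemplate P ≤ ({i : Fin d | i ∈ (c (f x0)).1}).ncard :=
        Nat.sInf_le ⟨_, rfl, hdist⟩
      have h3 : ({i : Fin d | i ∈ (c (f x0)).1}).ncard ≤ (c (f x0)).1.length := by
        have h4 : {i : Fin d | i ∈ (c (f x0)).1} = ↑(c (f x0)).1.toFinset := by
          ext i; simp
        rw [h4, Set.ncard_coe_finset]
        exact List.toFinset_card_le _
      have h5 := hclen (f x0)
      omega
    rw [IsDistinguisher] at hRnd
    push_neg at hRnd
    obtain ⟨x, hx, y, hy, hxy, hagree⟩ := hRnd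
    have hfx : f x ∈ s := by rw [hfQ]; exact ⟨x, hx, rfl⟩
    have hfy : f y ∈ s := by rw [hfQ]; exact ⟨y, hy, rfl⟩
    have hceq : c (f x) = c (f y) := hcon (f x) hfx (f y) hfy
    have hll : (c (f x)).1 = (c (f x0)).1 := by
      rw [hcon (f x) hfx (f x0) hfx0]
    have hfagree : ∀ i ∈ (c (f x)).1, f x i = f y i := by
      intro i hi
      rw [hll] at hi
      exact hfhom x hx y hy i (hagree i hi)
    have hfeq : f x = f y :=
      hcprop (f x) (f y) (fun i => trivial) (fun i => trivial) hceq hfagree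
    exact hxy (hfinj hx hy hfeq)
  haveI : Nonempty (Fin d) := ⟨⟨0, hd⟩⟩
  have hCmk : #(List (Fin d) × Quotient.out lam) = lam := by
    rw [Cardinal.mk_prod, Cardinal.lift_id, Cardinal.lift_id, hL, Cardinal.mk_list_eq_aleph0]
    rw [Cardinal.mul_eq_max le_rfl hlaminf, max_eq_right hlaminf]
  have hub : chrNum (multiTemplateEdges X ({P} : Set (Set (Fin d → α)))) ≤ lam := by
    unfold chrNum
    apply csInf_le (OrderBot.bddBelow _)
    exact ⟨List (Fin d) × Quotient.out lam, c, hCmk, hproper⟩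
  have hlb : lam ≤ chrNum (multiTemplateEdges X ({P} : Set (Set (Fin d → α)))) := by
    have hmemset : lam ∈ {κ : Cardinal | ∃ (C : Type) (φ : (Fin d → X) → C), #C = κ ∧
        IsProperColoring (multiTemplateEdges X ({P} : Set (Set (Fin d → α)))) φ} :=
      ⟨List (Fin d) × Quotient.out lam, c, hCmk, hproper⟩
    unfold chrNum
    apply le_csInf ⟨lam, hmemset⟩
    rintro b ⟨C, φ, rfl, hφ⟩
    by_contra hblt
    push_neg at hblt
    obtain ⟨z⟩ : Nonempty X := inferInstance
    have hcard_ι : Fintype.card I0 = eTemplate P := by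
      rw [← Nat.card_eq_fintype_card, Nat.card_coe_set_eq, hI0card]
    have hbox : ∃ b : I0 → Fin k → X, (∀ i, Function.Injective (b i)) ∧
        ∃ γ : C, ∀ r : I0 → Fin k,
          φ (fun i => if h : i ∈ I0 then b ⟨i, h⟩ (r ⟨i, h⟩) else z) = γ := by
      rcases finite_or_infinite C with hCfin | hCinf
      · obtain ⟨b, hbinj, γ, hγ⟩ := boxFinite k (eTemplate P) C hCfin I0 inferInstance hcard_ι
          (fun r => φ (fun i => if h : i ∈ I0 then r ⟨i, h⟩ else z))
        exact ⟨b, hbinj, γ, fun r => hγ r⟩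
      · have hCb : cardPlus (#C) n < #X := by
          by_contra hge
          push_neg at hge
          exact absurd (hmin _ hge) (not_le_of_gt hblt)
        have hμinf : ℵ₀ ≤ #C := Cardinal.infinite_iff.mp hCinf
        obtain ⟨b, hbinj, -, γ, hγ⟩ := boxInfinite k (by omega) (#C) hμinf le_rfl
          (eTemplate P) I0 inferInstance hcard_ι Set.univ
          (by rw [Cardinal.mk_univ]
              have hn' : eTemplate P - 1 = n := rfl
              rw [hn']
              exact hCb)
          (fun r => φ (fun i => if h : i ∈ I0 then r ⟨i, h⟩ else z))
        exact ⟨b, hbinj, γ, fun r => hγ r⟩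
    obtain ⟨b, hbinj, γ, hγ⟩ := hbox
    obtain ⟨Q, hQ, hQmono⟩ := mono_edge_of_box hk P hPfin hPcard I0 hI0dist z φ b hbinj γ hγ
    obtain ⟨w1, hw1, w2, hw2, hne⟩ := hφ Q hQ
    exact hne (by rw [hQmono w1 hw1, hQmono w2 hw2])
  exact le_antisymm hub hlb

end helpers
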